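/- arXiv:1311.1902 — 2 statements merged into one kernel-verified Lean document; each statement's English description precedes it below -/
import Mathlib

section
/- (Lions' Representation Theorem) Let 𝓗 be a Hilbert space and 𝓥 a pre-Hilbert space continuously embedded in 𝓗. Let E : 𝓗 × 𝓥 → 𝕂 be sesquilinear such that (1) for each w ∈ 𝓥 the map u ↦ E(u,w) is a continuous linear functional on 𝓗, and (2) |E(w,w)| ≥ α‖w‖²_𝓥 for all w ∈ 𝓥 and some α > 0. Then for every continuous (anti)linear functional L on 𝓥 there exists u ∈ 𝓗 with L(w) = E(u,w) for all w ∈ 𝓥. -/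
open MeasureTheory Set Function

/-- Lions' Representation Theorem: Let `𝓗` be a Hilbert space and `𝓥` a
pre-Hilbert space continuously embedded in `𝓗` via `i`. Let `E : 𝓗 × 𝓥 → 𝕜` be
sesquilinear (linear and continuous in the first variable, antilinear in the second)
with `|E(w,w)| ≥ α‖w‖²_𝓥` for all `w ∈ 𝓥`. Then every continuous antilinear functional
`L` on `𝓥` is represented: there is `u ∈ 𝓗` with `L w = E(u, w)` for all `w ∈ 𝓥`. -/
theorem stmt_5 {𝕜 𝓗 𝓥 : Type*} [RCLike 𝕜]
    [NormedAddCommGroup 𝓗] [InnerProductSpace 𝕜 𝓗] [CompleteSpace 𝓗]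
    [NormedAddCommGroup 𝓥] [InnerProductSpace 𝕜 𝓥]
    (i : 𝓥 →L[𝕜] 𝓗) (hi_inj : Injective i)
    (E : 𝓗 → 𝓥 → 𝕜) (α : ℝ) (hα : 0 < α)
    (hE_lin : ∀ w : 𝓥, ∃ φ : 𝓗 →L[𝕜] 𝕜, ∀ u : 𝓗, E u w = φ u)
    (hE_add : ∀ u : 𝓗, ∀ w w' : 𝓥, E u (w + w') = E u w + E u w')
    (hE_smul : ∀ u : 𝓗, ∀ (c : 𝕜) (w : 𝓥), E u (c • w) = starRingEnd 𝕜 c * E u w)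
    (hE_coercive : ∀ w : 𝓥, α * ‖w‖ ^ 2 ≤ ‖E (i w) w‖)
    (L : 𝓥 → 𝕜) (C : ℝ)
    (hL_add : ∀ w w' : 𝓥, L (w + w') = L w + L w')
    (hL_smul : ∀ (c : 𝕜) (w : 𝓥), L (c • w) = starRingEnd 𝕜 c * L w)
    (hL_bdd : ∀ w : 𝓥, ‖L w‖ ≤ C * ‖w‖) :
    ∃ u : 𝓗, ∀ w : 𝓥, L w = E u w := by
  classical
  choose φ hφ using hE_lin
  set T : 𝓥 → 𝓗 := fun w => (InnerProductSpace.toDual 𝕜 𝓗).symm (φ w) with hT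
  have hTinner : ∀ w u, (inner 𝕜 (T w) u : 𝕜) = E u w := by
    intro w u
    rw [hφ, hT]
    exact InnerProductSpace.toDual_symm_apply
  have hTadd : ∀ w w', T (w + w') = T w + T w' := by
    intro w w'
    apply ext_inner_right 𝕜
    intro u
    rw [inner_add_left, hTinner, hTinner, hTinner, hE_add]
  have hTsmul : ∀ (c : 𝕜) (w : 𝓥), T (c • w) = c • T w := by
    intro c w
    apply ext_inner_right 𝕜
    intro u
    rw [inner_smul_left, hTinner, hTinner, hE_smul]
  let Tlin : 𝓥 →ₗ[𝕜] 𝓗 := { toFun := T, map_add' := hTadd, map_smul' := hTsmul }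
  have hTbound : ∀ w, α * ‖w‖ ≤ ‖i‖ * ‖T w‖ := by
    intro w
    rcases eq_or_ne w 0 with rfl | hw
    · simp [Tlin, map_zero]
      positivity
    have h1 := hE_coercive w
    have h2 : ‖E (i w) w‖ = ‖(inner 𝕜 (T w) (i w) : 𝕜)‖ := by rw [hTinner]
    have h3 : ‖(inner 𝕜 (T w) (i w) : 𝕜)‖ ≤ ‖T w‖ * ‖i w‖ := norm_inner_le_norm _ _
    have h4 : ‖i w‖ ≤ ‖i‖ * ‖w‖ := i.le_opNorm w
    have hwpos : 0 < ‖w‖ := norm_pos_iff.mpr hw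
    nlinarith [norm_nonneg (T w), norm_nonneg (i w)]
  have hTinj : Injective Tlin := by
    rw [injective_iff_map_eq_zero]
    intro w hw
    have := hTbound w
    have hTw : (Tlin w : 𝓗) = T w := rfl
    rw [← hTw, hw, norm_zero, mul_zero] at this
    have : ‖w‖ ≤ 0 := by nlinarith
    simpa using le_antisymm this (norm_nonneg w)
  let Llin : 𝓥 →ₗ[𝕜] 𝕜 :=
    { toFun := fun w => starRingEnd 𝕜 (L w)
      map_add' := by intro w w'; simp [hL_add]
      map_smul' := by intro c w; simp [hL_smul, mul_comm] }
  let e := LinearEquiv.ofInjective Tlin hTinj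
  let g : LinearMap.range Tlin →ₗ[𝕜] 𝕜 := Llin ∘ₗ e.symm.toLinearMap
  have hg : ∀ w : 𝓥, g (e w) = starRingEnd 𝕜 (L w) := by
    intro w; simp [g, Llin]
  have gbound : ∀ x : LinearMap.range Tlin, ‖g x‖ ≤ (|C| * ‖i‖ / α) * ‖x‖ := by
    intro x
    obtain ⟨w, rfl⟩ := e.surjective x
    rw [hg]
    have hnorm : ‖(e w : 𝓗)‖ = ‖T w‖ := rfl
    have hLw : ‖L w‖ ≤ C * ‖w‖ := hL_bdd w
    have hb := hTbound w
    have hC : C * ‖w‖ ≤ |C| * ‖w‖ := by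
      have := le_abs_self C
      nlinarith [norm_nonneg w]
    have hnc : ‖starRingEnd 𝕜 (L w)‖ = ‖L w‖ := RCLike.norm_conj _
    have hx : ‖(e w : LinearMap.range Tlin)‖ = ‖T w‖ := by
      rw [← hnorm]; rfl
    rw [hnc, hx]
    have hCnn : (0:ℝ) ≤ |C| := abs_nonneg C
    have : |C| * (α * ‖w‖) ≤ |C| * (‖i‖ * ‖T w‖) := by
      exact mul_le_mul_of_nonneg_left hb hCnn
    calc ‖L w‖ ≤ C * ‖w‖ := hLw
      _ ≤ |C| * ‖w‖ := hC
      _ ≤ |C| * ‖i‖ / α * ‖T w‖ := by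
          rw [div_mul_eq_mul_div, le_div_iff₀ hα]
          nlinarith
  let gc : LinearMap.range Tlin →L[𝕜] 𝕜 := g.mkContinuous (|C| * ‖i‖ / α) gbound
  obtain ⟨h, hh, -⟩ := exists_extension_norm_eq (LinearMap.range Tlin) gc
  refine ⟨(InnerProductSpace.toDual 𝕜 𝓗).symm h, fun w => ?_⟩
  have h1 : E ((InnerProductSpace.toDual 𝕜 𝓗).symm h) w
      = (inner 𝕜 (T w) ((InnerProductSpace.toDual 𝕜 𝓗).symm h) : 𝕜) := (hTinner _ _).symm
  have h2 : (inner 𝕜 ((InnerProductSpace.toDual 𝕜 𝓗).symm h) (T w) : 𝕜) = h (T w) :=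
    InnerProductSpace.toDual_symm_apply
  have h3 : h (T w) = gc (e w) := by
    have := hh (e w)
    have hc : ((e w : LinearMap.range Tlin) : 𝓗) = T w := by
      simp [e, LinearEquiv.ofInjective_apply]; rfl
    rw [← hc]; exact this
  have h4 : gc (e w) = starRingEnd 𝕜 (L w) := hg w
  rw [h1, ← inner_conj_symm, h2, h3, h4, RCLike.conj_conj]
end

section
/- Let a : [0,T] × V × V → 𝕂 be V-bounded, Lipschitz in t, and additionally symmetric (a(t,u,v) = conj(a(t,v,u))). Then for u ∈ H¹(0,T;V), the derivative of t ↦ a(t,u(t),u(t)) equals 2 Re a(t,u(t),u̇(t)) + ȧ(t,u(t),u(t)) for a.e. t, where ȧ is the a.e. time-derivative form. -/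
open MeasureTheory Set Function

section Aux
open Filter Metric Topology Interval

lemma ae_hasDerivAt_primitive {V : Type*} [NormedAddCommGroup V] [NormedSpace ℝ V]
    [CompleteSpace V]
    (T : ℝ) (u u' : ℝ → V)
    (hint : IntegrableOn u' (Ioc 0 T) volume)
    (hu : ∀ t ∈ Icc (0:ℝ) T, u t = u 0 + ∫ s in (0:ℝ)..t, u' s) :
    ∀ᵐ t ∂(volume.restrict (Ioo 0 T)), HasDerivAt u (u' t) t := by
  set f : ℝ → V := (Ioc 0 T).indicator u' with hf_def
  have hf : Integrable f volume := hint.integrable_indicator measurableSet_Ioc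
  have hle := IsUnifLocDoublingMeasure.ae_tendsto_average_norm_sub
    (μ := (volume : Measure ℝ)) hf.locallyIntegrable 1
  rw [ae_restrict_iff' measurableSet_Ioo]
  filter_upwards [hle] with t ht htI
  have hftt : f t = u' t := indicator_of_mem (Ioo_subset_Ioc_self htI) u'
  have G : Tendsto (fun r : ℝ => ⨍ y in closedBall t r, ‖f y - f t‖) (𝓝[>] 0) (𝓝 0) := by
    refine ht (fun _ => t) id tendsto_id ?_
    refine eventually_mem_nhdsWithin.mono fun r hr => ?_
    have h0 : (0:ℝ) ≤ 1 * r := by simpa using (le_of_lt hr)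
    exact Metric.mem_closedBall_self h0
  rw [hasDerivAt_iff_isLittleO, Asymptotics.isLittleO_iff]
  intro c hc
  have hG : ∀ᶠ r in 𝓝[>] (0:ℝ), (⨍ y in closedBall t r, ‖f y - f t‖) < c/2 :=
    G (Iio_mem_nhds (by positivity))
  rw [eventually_nhdsWithin_iff, Metric.eventually_nhds_iff] at hG
  obtain ⟨ε, εpos, hε⟩ := hG
  filter_upwards [isOpen_Ioo.eventually_mem htI, Metric.ball_mem_nhds t εpos] with s hs hsb
  rcases eq_or_ne s t with rfl | hst
  · simp
  have hr0 : 0 < |s - t| := abs_pos.mpr (sub_ne_zero.mpr hst)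
  have hrε : |s - t| < ε := by simpa [Real.dist_eq] using hsb
  have hiL : ∀ x ∈ Icc (0:ℝ) T, IntervalIntegrable u' volume 0 x := by
    intro x hx
    rw [intervalIntegrable_iff_integrableOn_Ioc_of_le hx.1]
    exact hint.mono_set (Ioc_subset_Ioc le_rfl hx.2)
  have hsI : s ∈ Icc (0:ℝ) T := Ioo_subset_Icc_self hs
  have htI' : t ∈ Icc (0:ℝ) T := Ioo_subset_Icc_self htI
  have hts : IntervalIntegrable u' volume t s :=
    ((hiL s hsI).symm.trans (hiL t htI')).symm
  have key : u s - u t = ∫ σ in t..s, u' σ := by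
    rw [hu s hsI, hu t htI']
    simp only [add_sub_add_left_eq_sub]
    rw [intervalIntegral.integral_interval_sub_left (hiL s hsI) (hiL t htI')]
  have key2 : u s - u t - (s - t) • u' t = ∫ σ in t..s, (u' σ - u' t) := by
    rw [intervalIntegral.integral_sub hts intervalIntegrable_const, key,
      intervalIntegral.integral_const]
  rw [key2]
  have step1 : ‖∫ σ in t..s, (u' σ - u' t)‖ ≤ ∫ σ in Ι t s, ‖u' σ - u' t‖ :=
    intervalIntegral.norm_integral_le_integral_norm_uIoc
  have hsub : Ι t s ⊆ Ioc 0 T := by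
    rw [uIoc_eq_union]
    rintro σ (hσ | hσ)
    · exact ⟨lt_trans htI.1 hσ.1, le_trans hσ.2 hsI.2⟩
    · exact ⟨lt_trans hs.1 hσ.1, le_trans hσ.2 htI'.2⟩
  have heq : ∫ σ in Ι t s, ‖u' σ - u' t‖ = ∫ σ in Ι t s, ‖f σ - f t‖ := by
    refine setIntegral_congr_fun measurableSet_uIoc fun σ hσ => ?_
    rw [hftt]
    simp only [hf_def]
    rw [indicator_of_mem (hsub hσ)]
  have hsub2 : Ι t s ⊆ closedBall t |s - t| := by
    rw [uIoc_eq_union]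
    rintro σ (hσ | hσ) <;>
      · rw [Metric.mem_closedBall, Real.dist_eq, abs_sub_le_iff]
        constructor <;> cases abs_sub_le_iff.1 (le_refl |s - t|) <;>
          nlinarith [hσ.1, hσ.2, abs_nonneg (s - t), le_abs_self (s - t), neg_abs_le (s - t)]
  have hfball : IntegrableOn (fun σ => ‖f σ - f t‖) (closedBall t |s - t|) volume :=
    ((hf.integrableOn.sub (integrableOn_const measure_closedBall_lt_top.ne)).norm)
  have step2 : ∫ σ in Ι t s, ‖f σ - f t‖ ≤ ∫ σ in closedBall t |s - t|, ‖f σ - f t‖ := by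
    refine setIntegral_mono_set hfball ?_ (HasSubset.Subset.eventuallyLE hsub2)
    exact Eventually.of_forall fun σ => norm_nonneg _
  have hmeas : (volume (closedBall t |s - t|)).toReal = 2 * |s - t| := by
    rw [Real.volume_closedBall, ENNReal.toReal_ofReal (by positivity)]
  have step3 : ∫ σ in closedBall t |s - t|, ‖f σ - f t‖
      = (2 * |s - t|) * ⨍ σ in closedBall t |s - t|, ‖f σ - f t‖ := by
    rw [setAverage_eq, measureReal_def, hmeas, smul_eq_mul, ← mul_assoc, mul_inv_cancel₀ (by positivity), one_mul]
  have step4 : (⨍ σ in closedBall t |s - t|, ‖f σ - f t‖) < c / 2 :=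
    hε (by simpa [Real.dist_eq, abs_of_nonneg (abs_nonneg (s - t))] using hrε) hr0
  calc ‖∫ σ in t..s, (u' σ - u' t)‖ ≤ ∫ σ in Ι t s, ‖u' σ - u' t‖ := step1
    _ = ∫ σ in Ι t s, ‖f σ - f t‖ := heq
    _ ≤ ∫ σ in closedBall t |s - t|, ‖f σ - f t‖ := step2
    _ = (2 * |s - t|) * ⨍ σ in closedBall t |s - t|, ‖f σ - f t‖ := step3
    _ ≤ (2 * |s - t|) * (c/2) := by nlinarith [step4, hr0]
    _ = c * ‖s - t‖ := by rw [Real.norm_eq_abs]; ring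

lemma deriv_ext {𝕜 V : Type*} [RCLike 𝕜] [NormedAddCommGroup V] [InnerProductSpace 𝕜 V]
    (T Mdot : ℝ)
    (a a' : ℝ → (V →L[𝕜] (V →SL[starRingEnd 𝕜] 𝕜)))
    (ha_lip : ∀ s ∈ Icc (0:ℝ) T, ∀ t ∈ Icc (0:ℝ) T, ∀ x y : V,
      ‖a t x y - a s x y‖ ≤ Mdot * |t - s| * ‖x‖ * ‖y‖)
    (ha'_bdd : ∀ t ∈ Icc (0:ℝ) T, ∀ x y : V, ‖a' t x y‖ ≤ Mdot * ‖x‖ * ‖y‖)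
    (ha'_deriv : ∀ x y : V, ∀ᵐ t ∂(volume.restrict (Ioo 0 T)),
      HasDerivAt (fun s => a s x y) (a' t x y) t)
    (D : Set V) (hD : D.Countable) :
    ∀ᵐ t ∂(volume.restrict (Ioo 0 T)),
      ∀ x ∈ closure D, ∀ y ∈ closure D, HasDerivAt (fun s => a s x y) (a' t x y) t := by
  have hDD : ∀ᵐ t ∂(volume.restrict (Ioo 0 T)),
      ∀ x ∈ D, ∀ y ∈ D, HasDerivAt (fun s => a s x y) (a' t x y) t := by
    rw [ae_ball_iff hD]
    intro x _
    rw [ae_ball_iff hD]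
    intro y _
    exact ha'_deriv x y
  filter_upwards [hDD, ae_restrict_mem measurableSet_Ioo] with t hDt htI
  intro x hx y hy
  have htIcc : t ∈ Icc (0:ℝ) T := Ioo_subset_Icc_self htI
  rw [hasDerivAt_iff_isLittleO, Asymptotics.isLittleO_iff]
  intro c hc
  set N : ℝ := |Mdot| + 1 with hN_def
  have hN : 0 < N := by positivity
  have hMN : Mdot ≤ N := le_trans (le_abs_self _) (by simp [hN_def])
  set S : ℝ := ‖x‖ + ‖y‖ + 1 with hS_def
  have hS : 0 < S := by positivity
  set δ : ℝ := min 1 (c / (6 * N * S)) with hδ_def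
  have hδ : 0 < δ := lt_min one_pos (by positivity)
  have hδ1 : δ ≤ 1 := min_le_left _ _
  have hδ2 : δ * (N * S) ≤ c / 6 := by
    have h1 : δ ≤ c / (6 * N * S) := min_le_right _ _
    calc δ * (N * S) ≤ (c / (6 * N * S)) * (N * S) :=
          mul_le_mul_of_nonneg_right h1 (by positivity)
      _ = c / 6 := by field_simp
  obtain ⟨x', hx'D, hx'⟩ := Metric.mem_closure_iff.1 hx δ hδ
  obtain ⟨y', hy'D, hy'⟩ := Metric.mem_closure_iff.1 hy δ hδ
  rw [dist_eq_norm] at hx' hy'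
  have hxd : ‖x - x'‖ ≤ δ := hx'.le
  have hyd : ‖y - y'‖ ≤ δ := hy'.le
  have hx'le : ‖x'‖ ≤ ‖x‖ + 1 := by
    have h := norm_sub_norm_le x' x
    rw [norm_sub_rev] at h
    linarith
  have KB : Mdot * ‖x - x'‖ * ‖y‖ + Mdot * ‖x'‖ * ‖y - y'‖ ≤ c / 6 := by
    have h1 : Mdot * ‖x - x'‖ * ‖y‖ ≤ N * δ * ‖y‖ := by
      nlinarith [mul_nonneg (mul_nonneg (sub_nonneg.2 hMN) (norm_nonneg (x - x'))) (norm_nonneg y),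
        mul_nonneg (mul_nonneg hN.le (sub_nonneg.2 hxd)) (norm_nonneg y)]
    have h2 : Mdot * ‖x'‖ * ‖y - y'‖ ≤ N * (‖x‖ + 1) * δ := by
      nlinarith [mul_nonneg (mul_nonneg hN.le (by positivity : (0:ℝ) ≤ ‖x‖ + 1)) (sub_nonneg.2 hyd),
        mul_nonneg (mul_nonneg hN.le (sub_nonneg.2 hx'le)) (norm_nonneg (y - y')),
        mul_nonneg (mul_nonneg (sub_nonneg.2 hMN) (norm_nonneg x')) (norm_nonneg (y - y'))]
    have h3 : N * δ * ‖y‖ + N * (‖x‖ + 1) * δ = δ * (N * S) - N * δ * ‖x‖ + N * δ * ‖x‖ := by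
      rw [hS_def]; ring
    nlinarith [hδ2]
  have hd2 : ∀ᶠ s in 𝓝 t, ‖a s x' y' - a t x' y' - (s - t) • a' t x' y'‖ ≤ (c/3) * ‖s - t‖ :=
    (hasDerivAt_iff_isLittleO.1 (hDt x' hx'D y' hy'D)).def (by positivity)
  filter_upwards [hd2, isOpen_Ioo.eventually_mem htI] with s hs2 hsIoo
  have hsIcc : s ∈ Icc (0:ℝ) T := Ioo_subset_Icc_self hsIoo
  set K : ℝ := Mdot * ‖x - x'‖ * ‖y‖ + Mdot * ‖x'‖ * ‖y - y'‖ with hK_def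
  have hsplit : a s x y - a t x y - (s - t) • a' t x y =
      ((a s (x-x') y - a t (x-x') y) + (a s x' (y-y') - a t x' (y-y')))
      + (a s x' y' - a t x' y' - (s-t) • a' t x' y')
      + (s - t) • (a' t x' y' - a' t x y) := by
    simp only [map_sub, ContinuousLinearMap.sub_apply, smul_sub]
    ring
  have hT1n : ‖(a s (x-x') y - a t (x-x') y) + (a s x' (y-y') - a t x' (y-y'))‖
      ≤ K * |s - t| := by
    refine le_trans (norm_add_le _ _) ?_
    have b1 := ha_lip t htIcc s hsIcc (x - x') y
    have b2 := ha_lip t htIcc s hsIcc x' (y - y')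
    have : K * |s - t| = Mdot * |s - t| * ‖x - x'‖ * ‖y‖ + Mdot * |s - t| * ‖x'‖ * ‖y - y'‖ := by
      rw [hK_def]; ring
    linarith
  have hT3n : ‖(s - t) • (a' t x' y' - a' t x y)‖ ≤ |s - t| * K := by
    rw [norm_smul, Real.norm_eq_abs]
    refine mul_le_mul_of_nonneg_left ?_ (abs_nonneg _)
    have heq : a' t x y - a' t x' y' = a' t (x - x') y + a' t x' (y - y') := by
      simp only [map_sub, ContinuousLinearMap.sub_apply]
      ring
    rw [norm_sub_rev, heq, hK_def]
    exact le_trans (norm_add_le _ _)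
      (add_le_add (ha'_bdd t htIcc (x - x') y) (ha'_bdd t htIcc x' (y - y')))
  rw [hsplit]
  have habs : (0:ℝ) ≤ |s - t| := abs_nonneg _
  have hKr : K * |s - t| ≤ (c/6) * |s - t| := mul_le_mul_of_nonneg_right KB habs
  calc ‖_ + _ + _‖ ≤ _ := norm_add₃_le
    _ ≤ (c/6) * |s - t| + (c/3) * ‖s - t‖ + (c/6) * |s - t| := by
        refine add_le_add (add_le_add (hT1n.trans hKr) hs2) ?_
        calc ‖(s - t) • (a' t x' y' - a' t x y)‖ ≤ |s - t| * K := hT3n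
          _ = K * |s - t| := mul_comm _ _
          _ ≤ (c/6) * |s - t| := hKr
    _ ≤ c * ‖s - t‖ := by rw [Real.norm_eq_abs]; nlinarith [hc, habs]

lemma bilin_deriv {𝕜 V : Type*} [RCLike 𝕜] [NormedAddCommGroup V] [InnerProductSpace 𝕜 V]
    [NormedSpace ℝ V] [IsScalarTower ℝ 𝕜 V]
    (M : ℝ) (A : V →L[𝕜] (V →SL[starRingEnd 𝕜] 𝕜))
    (hA : ∀ x y : V, ‖A x y‖ ≤ M * ‖x‖ * ‖y‖)
    (u u' : ℝ → V) (t : ℝ) (hud : HasDerivAt u (u' t) t) :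
    HasDerivAt (fun s => A (u s) (u s)) (A (u t) (u' t) + A (u' t) (u t)) t := by
  have add1 : ∀ (v₁ v₂ w : V), A (v₁ + v₂) w = A v₁ w + A v₂ w := by
    intro v₁ v₂ w; simp
  have smul1 : ∀ (r : ℝ) (v w : V), A (r • v) w = r • (A v w) := by
    intro r v w
    rw [RCLike.real_smul_eq_coe_smul (K := 𝕜) r v, _root_.map_smul,
      ContinuousLinearMap.smul_apply, RCLike.real_smul_eq_coe_smul (K := 𝕜)]
  have add2 : ∀ (v w₁ w₂ : V), A v (w₁ + w₂) = A v w₁ + A v w₂ := by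
    intro v w₁ w₂; simp
  have smul2 : ∀ (r : ℝ) (v w : V), A v (r • w) = r • (A v w) := by
    intro r v w
    rw [RCLike.real_smul_eq_coe_smul (K := 𝕜) r w, ContinuousLinearMap.map_smulₛₗ,
      RCLike.conj_ofReal, RCLike.real_smul_eq_coe_smul (K := 𝕜)]
  let B₀ : V →ₗ[ℝ] V →ₗ[ℝ] 𝕜 := LinearMap.mk₂ ℝ (fun v w => A v w)
    add1 smul1 add2 smul2
  let B : V →L[ℝ] V →L[ℝ] 𝕜 := LinearMap.mkContinuous₂ B₀ M (fun x y => hA x y)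
  have hB : IsBoundedBilinearMap ℝ (fun p : V × V => B p.1 p.2) :=
    B.isBoundedBilinearMap
  have h2 := (hB.hasFDerivAt (u t, u t)).comp_hasDerivAt t (hud.prodMk hud)
  have h3 : (fun s => (fun p : V × V => B p.1 p.2) ((u s, u s))) = fun s => A (u s) (u s) := rfl
  have h4 : hB.deriv (u t, u t) (u' t, u' t) = A (u t) (u' t) + A (u' t) (u t) := by
    rw [hB.deriv_apply]; rfl
  rw [← h3, ← h4]
  exact h2

end Aux

open Filter Metric Topology

/-- Let `a` be a `V`-bounded (constant `M`), Lipschitz-in-`t`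
(constant `Mdot`) and symmetric non-autonomous sesquilinear form, with a.e.
time-derivative form `a'` (bounded by `Mdot`). Then for `u ∈ H¹(0,T;V)`, for a.e. `t`,
`(d/dt) a(t,u(t),u(t)) = 2 Re a(t,u(t),u̇(t)) + ȧ(t,u(t),u(t))`. -/
theorem stmt_8 {𝕜 V : Type*} [RCLike 𝕜]
    [NormedAddCommGroup V] [InnerProductSpace 𝕜 V] [CompleteSpace V]
    [NormedSpace ℝ V] [IsScalarTower ℝ 𝕜 V]
    (T M Mdot : ℝ) (hT : 0 < T)
    (a a' : ℝ → (V →L[𝕜] (V →SL[starRingEnd 𝕜] 𝕜)))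
    (ha_bdd : ∀ t ∈ Icc (0:ℝ) T, ∀ x y : V, ‖a t x y‖ ≤ M * ‖x‖ * ‖y‖)
    (ha_symm : ∀ t ∈ Icc (0:ℝ) T, ∀ x y : V, a t x y = starRingEnd 𝕜 (a t y x))
    (ha_lip : ∀ s ∈ Icc (0:ℝ) T, ∀ t ∈ Icc (0:ℝ) T, ∀ x y : V,
      ‖a t x y - a s x y‖ ≤ Mdot * |t - s| * ‖x‖ * ‖y‖)
    (ha'_bdd : ∀ t ∈ Icc (0:ℝ) T, ∀ x y : V, ‖a' t x y‖ ≤ Mdot * ‖x‖ * ‖y‖)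
    (ha'_deriv : ∀ x y : V, ∀ᵐ t ∂(volume.restrict (Ioo 0 T)),
      HasDerivAt (fun s => a s x y) (a' t x y) t)
    (u u' : ℝ → V)
    (hu2 : MemLp u 2 (volume.restrict (Ioc 0 T)))
    (hu'2 : MemLp u' 2 (volume.restrict (Ioc 0 T)))
    (hu : ∀ t ∈ Icc (0:ℝ) T, u t = u 0 + ∫ s in (0:ℝ)..t, u' s) :
    ∀ᵐ t ∂(volume.restrict (Ioo 0 T)),
      HasDerivAt (fun s => a s (u s) (u s))
        (((2 * RCLike.re (a t (u t) (u' t)) : ℝ) : 𝕜) + a' t (u t) (u t)) t := by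
  haveI : IsFiniteMeasure (volume.restrict (Ioc (0:ℝ) T)) := by
    constructor
    rw [Measure.restrict_apply_univ]
    simp [Real.volume_Ioc]
  have hint : IntegrableOn u' (Ioc 0 T) volume := hu'2.integrable one_le_two
  have hud := ae_hasDerivAt_primitive T u u' hint hu
  have hIcc : IntegrableOn u' (Icc 0 T) volume :=
    (integrableOn_Icc_iff_integrableOn_Ioc enorm_ne_top).2 hint
  have hcont : ContinuousOn u (Icc 0 T) := by
    have hprim : ContinuousOn (fun x => ∫ σ in Ioc 0 x, u' σ) (Icc 0 T) :=
      intervalIntegral.continuousOn_primitive hIcc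
    refine ((continuousOn_const (c := u 0)).add hprim).congr fun t ht => ?_
    rw [hu t ht, intervalIntegral.integral_of_le ht.1]
    rfl
  obtain ⟨D, hDc, hDsub⟩ : TopologicalSpace.IsSeparable (u '' Icc 0 T) :=
    (isCompact_Icc.image_of_continuousOn hcont).isSeparable
  have hmem : ∀ s ∈ Icc (0:ℝ) T, u s ∈ closure D := fun s hs => hDsub ⟨s, hs, rfl⟩
  have hall := deriv_ext T Mdot a a' ha_lip ha'_bdd ha'_deriv D hDc
  filter_upwards [hud, hall, ae_restrict_mem measurableSet_Ioo] with t hudt hallt htI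
  have htIcc : t ∈ Icc (0:ℝ) T := Ioo_subset_Icc_self htI
  have huc : u t ∈ closure D := hmem t htIcc
  have P1 : HasDerivAt (fun s => a s (u t) (u t)) (a' t (u t) (u t)) t := hallt _ huc _ huc
  have P2 : HasDerivAt (fun s => a t (u s) (u s)) (a t (u t) (u' t) + a t (u' t) (u t)) t :=
    bilin_deriv M (a t) (fun x y => ha_bdd t htIcc x y) u u' t hudt
  have P3 : HasDerivAt (fun s => a s (u s) (u s) - a s (u t) (u t)
      - a t (u s) (u s) + a t (u t) (u t)) 0 t := by
    have h0 : a t (u t) (u t) - a t (u t) (u t) - a t (u t) (u t) + a t (u t) (u t) = 0 := by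
      ring
    rw [hasDerivAt_iff_isLittleO]
    simp only [h0, smul_zero, sub_zero]
    rw [Asymptotics.isLittleO_iff]
    intro c hc
    set R : ℝ := ‖u t‖ with hR_def
    have hR : 0 ≤ R := norm_nonneg _
    set N : ℝ := |Mdot| + 1 with hN_def
    have hN : 0 < N := by positivity
    have hMN : Mdot ≤ N := le_trans (le_abs_self _) (by simp [hN_def])
    set ε : ℝ := c / (N * (2 * R + 1)) with hε_def
    have hε : 0 < ε := by positivity
    have hεid : ε * (N * (2 * R + 1)) = c := by
      rw [hε_def]
      field_simp
    have hnear : ∀ᶠ s in 𝓝 t, ‖u s - u t‖ < min 1 ε := by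
      have h1 : Tendsto (fun s => ‖u s - u t‖) (𝓝 t) (𝓝 0) := by
        have h2 : Tendsto u (𝓝 t) (𝓝 (u t)) := hudt.continuousAt
        have h3 : Tendsto (fun s => u s - u t) (𝓝 t) (𝓝 0) := by
          simpa using h2.sub (tendsto_const_nhds (x := u t))
        simpa using h3.norm
      exact h1 (Iio_mem_nhds (lt_min one_pos hε))
    filter_upwards [hnear, isOpen_Ioo.eventually_mem htI] with s hsn hsIoo
    have hsIcc : s ∈ Icc (0:ℝ) T := Ioo_subset_Icc_self hsIoo
    have hd1 : ‖u s - u t‖ ≤ 1 := le_of_lt (lt_of_lt_of_le hsn (min_le_left _ _))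
    have hdε : ‖u s - u t‖ ≤ ε := le_of_lt (lt_of_lt_of_le hsn (min_le_right _ _))
    have husn : ‖u s‖ ≤ R + 1 := by
      have h := norm_sub_norm_le (u s) (u t)
      rw [hR_def] at *
      linarith
    have hgs : a s (u s) (u s) - a s (u t) (u t) - a t (u s) (u s) + a t (u t) (u t)
        = (a s (u s - u t) (u s) - a t (u s - u t) (u s))
          + (a s (u t) (u s - u t) - a t (u t) (u s - u t)) := by
      simp only [map_sub, ContinuousLinearMap.sub_apply]
      ring
    have b1 := ha_lip t htIcc s hsIcc (u s - u t) (u s)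
    have b2 := ha_lip t htIcc s hsIcc (u t) (u s - u t)
    have hA1 : Mdot * ‖u s - u t‖ * ‖u s‖ ≤ N * ε * (R + 1) := by
      nlinarith [mul_nonneg (mul_nonneg (sub_nonneg.2 hMN) (norm_nonneg (u s - u t)))
          (norm_nonneg (u s)),
        mul_nonneg (mul_nonneg hN.le (sub_nonneg.2 hdε)) (norm_nonneg (u s)),
        mul_nonneg (mul_nonneg hN.le hε.le) (sub_nonneg.2 husn)]
    have hA2 : Mdot * R * ‖u s - u t‖ ≤ N * R * ε := by
      nlinarith [mul_nonneg (mul_nonneg (sub_nonneg.2 hMN) hR) (norm_nonneg (u s - u t)),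
        mul_nonneg (mul_nonneg hN.le hR) (sub_nonneg.2 hdε)]
    have hsum : N * ε * (R + 1) + N * R * ε = c := by rw [← hεid]; ring
    have key : Mdot * ‖u s - u t‖ * ‖u s‖ + Mdot * R * ‖u s - u t‖ ≤ c := by linarith
    calc ‖a s (u s) (u s) - a s (u t) (u t) - a t (u s) (u s) + a t (u t) (u t)‖
        = ‖(a s (u s - u t) (u s) - a t (u s - u t) (u s))
          + (a s (u t) (u s - u t) - a t (u t) (u s - u t))‖ := by rw [hgs]
      _ ≤ (Mdot * ‖u s - u t‖ * ‖u s‖ + Mdot * R * ‖u s - u t‖) * |s - t| := by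
          refine le_trans (norm_add_le _ _) ?_
          have heq : (Mdot * ‖u s - u t‖ * ‖u s‖ + Mdot * R * ‖u s - u t‖) * |s - t|
              = Mdot * |s - t| * ‖u s - u t‖ * ‖u s‖ + Mdot * |s - t| * ‖u t‖ * ‖u s - u t‖ := by
            rw [hR_def]; ring
          linarith
      _ ≤ c * |s - t| := mul_le_mul_of_nonneg_right key (abs_nonneg _)
      _ = c * ‖s - t‖ := by rw [Real.norm_eq_abs]
  have comb := ((P3.add P1).add P2).sub_const (a t (u t) (u t))
  have hfun : (fun s => ((a s (u s) (u s) - a s (u t) (u t) - a t (u s) (u s)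
        + a t (u t) (u t)) + a s (u t) (u t) + a t (u s) (u s)) - a t (u t) (u t))
      = fun s => a s (u s) (u s) := by
    funext s
    ring
  simp only [Pi.add_apply] at comb
  rw [hfun] at comb
  have hsym : a t (u' t) (u t) = starRingEnd 𝕜 (a t (u t) (u' t)) :=
    ha_symm t htIcc (u' t) (u t)
  refine comb.congr_deriv ?_
  rw [hsym, RCLike.add_conj]
  push_cast
  ring
end
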